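/- For a reduced knot diagram D with c crossings, the F₂ vector space of subsets of regions has dimension c+2, the effect map onto F₂^c is surjective, and hence its kernel has dimension exactly 2, consisting of {∅, B, W, B∪W} where B and W are the black and white region classes. -/

import Mathlib

/-!
STATEMENT 14: for a reduced knot diagram `D` with `c` crossings, the `F₂`
vector space of subsets of regions has dimension `c + 2` (as `D` has `c + 2`
regions), the effect map onto `F₂^c` is surjective, and its kernel has
dimension exactly 2, consisting of `{∅, B, W, B ∪ W}` (as indicator vectors),
where `B` and `W` are theblack and white region classes of a checkerboard
coloring.

A knot diagram is modelled faithfully by a rotation system.  A *dart* is a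
pair `(v, i)`: the `i`-th edge-end (in counterclockwise cyclic order) at the
crossing `v`.  The fixed-point-free involution `α` pairs the two ends of each
edge of the underlying 4-valent graph; `opp` sends a dart to the opposite dart
at the same crossing (continuing along the same strand).  The diagram is a
*knot* diagram when the relation generated by `α` and `opp` relates all darts
(the underlying curve has a single component), and it is *planar* (lies on
`S²`) when Euler's formula holds: the face permutation `α.trans rot` has
exactly `n + 2` orbits.  Regions are the orbits of the face permutation, and
`M R c` is the parity of the number of corners (darts) of the region `R` at
the crossing `c`.  Region crossing changes at a finite set `P` of regions add
`∑_{R ∈ P} M R ·` to the over/under vector in `F₂ = ZMod 2`.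
-/

open Equiv

abbrev Dart (n : ℕ) := Fin n × Fin 4

/-- the rotation of darts around a crossing -/
def rot (n : ℕ) : Equiv.Perm (Dart n) :=
  (Equiv.refl (Fin n)).prodCongr (Equiv.addRight (1 : Fin 4))

/-- the opposite dart at the same crossing (same strand) -/
def opp (n : ℕ) : Equiv.Perm (Dart n) :=
  (Equiv.refl (Fin n)).prodCongr (Equiv.addRight (2 : Fin 4))

/-- the setoid whose classes are the cycles (orbits) of a permutation -/
def cycleSetoid {β : Type*} (f : Equiv.Perm β) : Setoid β :=
  ⟨f.SameCycle, ⟨fun _ => Equiv.Perm.SameCycle.refl f _,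
    Equiv.Perm.SameCycle.symm, Equiv.Perm.SameCycle.trans⟩⟩

/-- a knot diagram with `n` crossings, encoded by a rotation system -/
structure KnotDiagram (n : ℕ) where
  pos : 0 < n
  /-- the fixed-point-free involution pairing the two ends of each edge -/
  α : Equiv.Perm (Dart n)
  invol : ∀ d, α (α d) = d
  no_fix : ∀ d, α d ≠ d
  /-- the underlying curve has a single component (it is a knot diagram) -/
  oneComponent : ∀ d d' : Dart n,
    Relation.EqvGen (fun x y => y = α x ∨ y = opp n x) d d'
  /-- planarity via Euler's formula: the face permutation has `n + 2` orbits -/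
  planar : Nat.card (Quotient (cycleSetoid (α.trans (rot n)))) = n + 2

/-- the regions (faces) of a knot diagram -/
def KnotDiagram.Region {n : ℕ} (D : KnotDiagram n) : Type :=
  Quotient (cycleSetoid (D.α.trans (rot n)))

/-- the region in whose boundary a given dart (corner) lies -/
def KnotDiagram.regionOf {n : ℕ} (D : KnotDiagram n) (d : Dart n) : D.Region :=
  Quotient.mk _ d

/-- the region-crossing incidence matrix over `F₂`: the parity of the number
of corners of region `R` at crossing `c` -/
noncomputable def KnotDiagram.M {n : ℕ} (D : KnotDiagram n) (R : D.Region) (c : Fin n) :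
    ZMod 2 :=
  (Nat.card {i : Fin 4 // D.regionOf (c, i) = R} : ZMod 2)

/-- the effect of region crossing changes at a set `P` of regions on the
crossing `c` -/
noncomputable def KnotDiagram.effect {n : ℕ} (D : KnotDiagram n) (P : Finset D.Region)
    (c : Fin n) : ZMod 2 :=
  ∑ R ∈ P, D.M R c

noncomputable instance {n : ℕ} (D : KnotDiagram n) : Fintype D.Region :=
  @Fintype.ofFinite _ (Quotient.finite _)

/-- `D` is reduced: at every crossing the two pairs of opposite corners lie in
distinct regions. -/
def KnotDiagram.Reduced {n : ℕ} (D : KnotDiagram n) : Prop :=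
  ∀ c : Fin n, D.regionOf (c, 0) ≠ D.regionOf (c, 2) ∧
    D.regionOf (c, 1) ≠ D.regionOf (c, 3)

/-- the effect map: it sends (the indicator vector of) a set of regions to
its total effect on the crossings, over `F₂` -/
noncomputable def KnotDiagram.effectMap {n : ℕ} (D : KnotDiagram n) :
    (D.Region → ZMod 2) →ₗ[ZMod 2] (Fin n → ZMod 2) :=
  Matrix.vecMulLinear (Matrix.of fun R c => D.M R c)


section Aux

variable {n : ℕ} (D : KnotDiagram n)

lemma rot_apply (c : Fin n) (i : Fin 4) : rot n (c, i) = (c, i + 1) := rfl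

lemma opp_apply (c : Fin n) (i : Fin 4) : opp n (c, i) = (c, i + 2) := rfl

lemma KnotDiagram.regionOf_phi (d : Dart n) :
    D.regionOf (rot n (D.α d)) = D.regionOf d := by
  refine Quotient.sound ?_
  show Equiv.Perm.SameCycle (D.α.trans (rot n)) (rot n (D.α d)) d
  refine ⟨-1, ?_⟩
  have h : (rot n) (D.α d) = (D.α.trans (rot n)) d := rfl
  rw [h, zpow_neg_one]
  exact Equiv.symm_apply_apply _ _

lemma KnotDiagram.regionOf_alpha (d : Dart n) :
    D.regionOf (D.α d) = D.regionOf (rot n d) := by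
  have h := D.regionOf_phi (D.α d)
  rw [D.invol] at h
  exact h.symm

lemma KnotDiagram.effectMap_apply (v : D.Region → ZMod 2) (c : Fin n) :
    D.effectMap v c = ∑ i : Fin 4, v (D.regionOf (c, i)) := by
  classical
  have hM : ∀ R : D.Region, D.M R c
      = ∑ i : Fin 4, if D.regionOf (c, i) = R then (1 : ZMod 2) else 0 := by
    intro R
    rw [KnotDiagram.M, Nat.card_eq_fintype_card, Fintype.card_subtype, Finset.card_filter]
    push_cast
    rfl
  have h1 : D.effectMap v c = ∑ R : D.Region, v R * D.M R c := by
    simp [KnotDiagram.effectMap, Matrix.vecMul, dotProduct]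
  rw [h1]
  calc ∑ R : D.Region, v R * D.M R c
      = ∑ R : D.Region, ∑ i : Fin 4, if D.regionOf (c, i) = R then v R else 0 := by
        refine Finset.sum_congr rfl fun R _ => ?_
        rw [hM R, Finset.mul_sum]
        exact Finset.sum_congr rfl fun i _ => by split <;> simp
    _ = ∑ i : Fin 4, ∑ R : D.Region, if D.regionOf (c, i) = R then v R else 0 :=
        Finset.sum_comm
    _ = ∑ i : Fin 4, v (D.regionOf (c, i)) := by
        refine Finset.sum_congr rfl fun i _ => ?_
        rw [Finset.sum_ite_eq]
        simp

lemma KnotDiagram.mem_ker_iff (v : D.Region → ZMod 2) :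
    v ∈ LinearMap.ker D.effectMap ↔
      ∀ c : Fin n, ∑ i : Fin 4, v (D.regionOf (c, i)) = 0 := by
  rw [LinearMap.mem_ker, funext_iff]
  exact forall_congr' fun c => by rw [D.effectMap_apply v c]; rfl

end Aux

set_option maxHeartbeats 1600000 in
theorem effect_map_dimensions
    {n : ℕ} (D : KnotDiagram n) (hred : D.Reduced)
    (col : D.Region → Bool)
    (hcol : ∀ d : Dart n, col (D.regionOf d) ≠ col (D.regionOf (rot n d)))
    (indB indW : D.Region → ZMod 2)
    (hindB : indB = fun R => if col R = true then 1 else 0)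
    (hindW : indW = fun R => if col R = false then 1 else 0) :
    Module.finrank (ZMod 2) (D.Region → ZMod 2) = n + 2 ∧
      Function.Surjective D.effectMap ∧
      Module.finrank (ZMod 2) ↥(LinearMap.ker D.effectMap) = 2 ∧
      (LinearMap.ker D.effectMap : Set (D.Region → ZMod 2))
        = {0, indB, indW, indB + indW} := by
  classical
  have two : ∀ a b : ZMod 2, a + b = 0 ↔ a = b := by decide
  have two' : ∀ a b c : ZMod 2, a + b = c → b = a + c := by decide
  have zmodcases : ∀ a : ZMod 2, a = 0 ∨ a = 1 := by decide
  -- indB flips by 1 across rot, and so does indW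
  have hBflip : ∀ d : Dart n,
      indB (D.regionOf (rot n d)) = indB (D.regionOf d) + 1 := by
    intro d
    rw [hindB]
    have h := hcol d
    cases hb : col (D.regionOf d) <;> cases hr : col (D.regionOf (rot n d)) <;>
      simp_all <;> decide
  have hWflip : ∀ d : Dart n,
      indW (D.regionOf (rot n d)) = indW (D.regionOf d) + 1 := by
    intro d
    rw [hindW]
    have h := hcol d
    cases hb : col (D.regionOf d) <;> cases hr : col (D.regionOf (rot n d)) <;>
      simp_all <;> decide
  -- basic Fin 4 facts
  have fin1 : ∀ i : Fin 4, i + 1 + 1 = i + 2 := by decide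
  have fin2 : ∀ i : Fin 4, i + 2 + 1 = i + 3 := by decide
  -- a region-function invariant across `rot`-adjacency is constant
  have const_of : ∀ w : D.Region → ZMod 2,
      (∀ d : Dart n, w (D.regionOf (rot n d)) = w (D.regionOf d)) →
      ∀ R : D.Region, w R = w (D.regionOf (⟨0, D.pos⟩, 0)) := by
    intro w hw R
    obtain ⟨d, rfl⟩ : ∃ d : Dart n, D.regionOf d = R := Quotient.exists_rep R
    set d0 : Dart n := (⟨0, D.pos⟩, 0) with hd0
    suffices hkey : ∀ x y : Dart n, w (D.regionOf x) = w (D.regionOf y) by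
      exact hkey d d0
    intro x y
    induction D.oneComponent x y with
    | rel a b hab =>
      rcases hab with h1 | h1
      · rw [h1, D.regionOf_alpha, hw]
      · obtain ⟨c, i⟩ := a
        rw [h1, opp_apply]
        have e1 : (c, i + 2) = rot n (rot n (c, i)) := by
          rw [rot_apply, rot_apply, fin1]
        rw [e1, hw, hw]
    | refl a => rfl
    | symm a b _ ih => exact ih.symm
    | trans a b c _ _ ih1 ih2 => exact ih1.trans ih2
  -- membership in kernel of the four elements
  have sum4 : ∀ (u : D.Region → ZMod 2),
      (∀ d : Dart n, u (D.regionOf (rot n d)) = u (D.regionOf d) + 1) →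
      u ∈ LinearMap.ker D.effectMap := by
    intro u hu
    rw [D.mem_ker_iff]
    intro c
    have h1 := hu (c, 0)
    have h2 := hu (c, 1)
    have h3 := hu (c, 2)
    rw [rot_apply] at h1 h2 h3
    have e1 : (0 : Fin 4) + 1 = 1 := by decide
    have e2 : (1 : Fin 4) + 1 = 2 := by decide
    have e3 : (2 : Fin 4) + 1 = 3 := by decide
    rw [e1] at h1; rw [e2] at h2; rw [e3] at h3
    rw [Fin.sum_univ_four, h2, h3, h2, h1]
    generalize u (D.regionOf (c, 0)) = a
    revert a; decide
  have hBker : indB ∈ LinearMap.ker D.effectMap := sum4 indB hBflip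
  have hWker : indW ∈ LinearMap.ker D.effectMap := sum4 indW hWflip
  -- classification of kernel elements
  have classify : ∀ v ∈ LinearMap.ker D.effectMap,
      v = 0 ∨ v = indB ∨ v = indW ∨ v = indB + indW := by
    intro v hv
    rw [D.mem_ker_iff] at hv
    set h : Dart n → ZMod 2 :=
      fun d => v (D.regionOf d) + v (D.regionOf (rot n d)) with hh
    have halpha : ∀ d, h (D.α d) = h d := by
      intro d
      show v (D.regionOf (D.α d)) + v (D.regionOf (rot n (D.α d)))
          = v (D.regionOf d) + v (D.regionOf (rot n d))
      rw [D.regionOf_alpha, D.regionOf_phi, add_comm]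
    have hsum : ∀ (c : Fin n) (i : Fin 4),
        v (D.regionOf (c, i)) + v (D.regionOf (c, i + 1))
          + (v (D.regionOf (c, i + 2)) + v (D.regionOf (c, i + 3))) = 0 := by
      intro c i
      have hrei : ∑ j : Fin 4, v (D.regionOf (c, j + i)) = 0 := by
        rw [Fintype.sum_equiv (Equiv.addRight i)
          (fun j => v (D.regionOf (c, j + i))) (fun j => v (D.regionOf (c, j)))
          (fun j => rfl)]
        exact hv c
      rw [Fin.sum_univ_four] at hrei
      have e0 : (0 : Fin 4) + i = i := by rw [zero_add]
      rw [e0, add_comm (1 : Fin 4) i, add_comm (2 : Fin 4) i,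
        add_comm (3 : Fin 4) i] at hrei
      rw [← add_assoc]
      exact hrei
    have hopp : ∀ d, h (opp n d) = h d := by
      intro d
      obtain ⟨c, i⟩ := d
      show v (D.regionOf (c, i + 2)) + v (D.regionOf (rot n (c, i + 2)))
          = v (D.regionOf (c, i)) + v (D.regionOf (c, i + 1))
      rw [rot_apply, fin2]
      have := hsum c i
      rw [add_comm (v (D.regionOf (c, i)) + v (D.regionOf (c, i + 1)))] at this
      exact (two _ _).mp this
    have hconst : ∀ x y : Dart n, h x = h y := by
      intro x y
      induction D.oneComponent x y with
      | rel a b hab =>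
        rcases hab with h1 | h1
        · rw [h1, halpha]
        · rw [h1, hopp]
      | refl a => rfl
      | symm a b _ ih => exact ih.symm
      | trans a b c _ _ ih1 ih2 => exact ih1.trans ih2
    set d0 : Dart n := (⟨0, D.pos⟩, 0) with hd0
    set ε : ZMod 2 := h d0 with hε
    have hflip : ∀ d : Dart n,
        v (D.regionOf (rot n d)) = v (D.regionOf d) + ε := by
      intro d
      exact two' _ _ _ (hconst d d0)
    rcases zmodcases ε with he | he
    · -- v is constant
      have hc := const_of v (fun d => by rw [hflip d, he, add_zero])
      rcases zmodcases (v (D.regionOf (d0))) with hk | hk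
      · left
        funext R
        rw [hc R, hk]; rfl
      · right; right; right
        funext R
        rw [hc R, hk, hindB, hindW]
        cases hcR : col R <;> simp [hcR]
    · -- v + indB is constant
      set w : D.Region → ZMod 2 := fun R => v R + indB R with hw
      have hwconst : ∀ d : Dart n, w (D.regionOf (rot n d)) = w (D.regionOf d) := by
        intro d
        show v (D.regionOf (rot n d)) + indB (D.regionOf (rot n d)) = _
        rw [hflip d, he, hBflip d]
        show v (D.regionOf d) + 1 + (indB (D.regionOf d) + 1)
            = v (D.regionOf d) + indB (D.regionOf d)
        generalize v (D.regionOf d) = a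
        generalize indB (D.regionOf d) = b
        revert a b; decide
      have hc := const_of w hwconst
      have hvw : ∀ R, v R = w R + indB R := by
        intro R
        show v R = v R + indB R + indB R
        generalize v R = a; generalize indB R = b
        revert a b; decide
      rcases zmodcases (w (D.regionOf d0)) with hk | hk
      · right; left
        funext R
        rw [hvw R, hc R, hk, zero_add]
      · right; right; left
        funext R
        rw [hvw R, hc R, hk, hindB, hindW]
        cases hcR : col R <;> simp [hcR] <;> decide
  -- the set equality
  have hset : (LinearMap.ker D.effectMap : Set (D.Region → ZMod 2))
      = {0, indB, indW, indB + indW} := by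
    ext v
    simp only [Set.mem_insert_iff, Set.mem_singleton_iff, SetLike.mem_coe]
    constructor
    · exact classify v
    · rintro (rfl | rfl | rfl | rfl)
      · exact zero_mem _
      · exact hBker
      · exact hWker
      · exact add_mem hBker hWker
  -- dimensions
  have hdim : Module.finrank (ZMod 2) (D.Region → ZMod 2) = n + 2 := by
    rw [Module.finrank_pi, ← Nat.card_eq_fintype_card]
    exact D.planar
  -- a black and a white region exist
  have boolne : ∀ a b : Bool, a ≠ b → (a = true ∧ b = false) ∨ (a = false ∧ b = true) := by
    decide
  obtain ⟨Rb, hRb, Rw, hRw⟩ : ∃ Rb, col Rb = true ∧ ∃ Rw, col Rw = false := by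
    rcases boolne _ _ (hcol (⟨0, D.pos⟩, 0)) with ⟨h1, h2⟩ | ⟨h1, h2⟩
    · exact ⟨_, h1, _, h2⟩
    · exact ⟨_, h2, _, h1⟩
  have hBval : indB Rb = 1 := by rw [hindB]; simp [hRb]
  have hBvalw : indB Rw = 0 := by rw [hindB]; simp [hRw]
  have hWval : indW Rw = 1 := by rw [hindW]; simp [hRw]
  have hWvalb : indW Rb = 0 := by rw [hindW]; simp [hRb]
  have hli : LinearIndependent (ZMod 2) ![indB, indW] := by
    rw [LinearIndependent.pair_iff]
    intro s t hst
    have hb := congrFun hst Rb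
    have hw := congrFun hst Rw
    simp only [Pi.add_apply, Pi.smul_apply, smul_eq_mul, Pi.zero_apply,
      hBval, hBvalw, hWval, hWvalb, mul_one, mul_zero, add_zero, zero_add] at hb hw
    exact ⟨hb, hw⟩
  have hspan : LinearMap.ker D.effectMap
      = Submodule.span (ZMod 2) (Set.range ![indB, indW]) := by
    have hr : Set.range ![indB, indW] = {indB, indW} := by
      ext x
      simp only [Set.mem_range, Set.mem_insert_iff, Set.mem_singleton_iff]
      constructor
      · rintro ⟨j, rfl⟩
        fin_cases j
        · left; rfl
        · right; rfl
      · rintro (rfl | rfl)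
        · exact ⟨0, rfl⟩
        · exact ⟨1, rfl⟩
    rw [hr]
    apply le_antisymm
    · intro v hv
      rcases classify v hv with rfl | rfl | rfl | rfl
      · exact zero_mem _
      · exact Submodule.subset_span (by simp)
      · exact Submodule.subset_span (by simp)
      · exact add_mem (Submodule.subset_span (by simp))
          (Submodule.subset_span (by simp))
    · rw [Submodule.span_le]
      intro x hx
      simp only [Set.mem_insert_iff, Set.mem_singleton_iff] at hx
      rcases hx with rfl | rfl
      · exact hBker
      · exact hWker
  have hker2 : Module.finrank (ZMod 2) ↥(LinearMap.ker D.effectMap) = 2 := by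
    rw [hspan, finrank_span_eq_card hli]
    simp
  have hsurj : Function.Surjective D.effectMap := by
    rw [← LinearMap.range_eq_top]
    have hrk := LinearMap.finrank_range_add_finrank_ker D.effectMap
    rw [hker2, hdim] at hrk
    apply Submodule.eq_top_of_finrank_eq
    rw [Module.finrank_pi]
    simp only [Fintype.card_fin]
    omega
  exact ⟨hdim, hsurj, hker2, hset⟩
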